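/- arXiv:1411.0859 — 4 statements merged into one kernel-verified Lean document; each statement's English description precedes it below -/
import Mathlib

section
/- Let f : ℝⁿ → ℝ be a continuous semi-algebraic function with S := {x ∈ ℝⁿ : f(x) ≤ 0} nonempty, and suppose there exists a constant c > 0 such that m_f(x) ≥ c for all x with f(x) > 0. Then the linear global error bound c·d(x,S) ≤ [f(x)]_+ holds for all x ∈ ℝⁿ. -/
open Filter Topology Metric Set Pointwise
open scoped RealInnerProductSpace ENNReal

noncomputable section

abbrev En (n : ℕ) := EuclideanSpace ℝ (Fin n)

def toE {n : ℕ} (v : Fin n → ℝ) : En n := WithLp.toLp 2 v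

def IsBasicSA {m : ℕ} (s : Set (Fin m → ℝ)) : Prop :=
  ∃ (k l : ℕ) (g : Fin l → MvPolynomial (Fin m) ℝ),
    s = {x | (∀ i : Fin l, (i : ℕ) < k → MvPolynomial.eval x (g i) = 0) ∧
             (∀ i : Fin l, k ≤ (i : ℕ) → 0 < MvPolynomial.eval x (g i))}

def IsSA {m : ℕ} (s : Set (Fin m → ℝ)) : Prop :=
  ∃ (N : ℕ) (t : Fin N → Set (Fin m → ℝ)), (∀ i, IsBasicSA (t i)) ∧ s = ⋃ i, t i

def IsSASet {n : ℕ} (s : Set (En n)) : Prop := IsSA (toE ⁻¹' s)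

def IsSAFun {n : ℕ} (f : En n → ℝ) : Prop :=
  IsSA {z : Fin (n+1) → ℝ | z (Fin.last n) = f (toE fun j => z j.castSucc)}

def IsSAMap {n p : ℕ} (F : En n → Fin p → ℝ) : Prop :=
  IsSA {z : Fin (n+p) → ℝ | ∀ i : Fin p, z (Fin.natAdd n i) = F (toE fun j => z (Fin.castAdd p j)) i}

def IsSAFunOn (f : ℝ → ℝ) (s : Set ℝ) : Prop :=
  IsSA {z : Fin 2 → ℝ | z 0 ∈ s ∧ z 1 = f (z 0)}

def FrechetSubdiff {n : ℕ} (f : En n → ℝ) (x : En n) : Set (En n) :=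
  {v | ∀ ε > (0:ℝ), ∃ δ > (0:ℝ), ∀ h : En n, h ≠ 0 → ‖h‖ < δ →
        -ε * ‖h‖ ≤ f (x + h) - f x - ⟪v, h⟫}

def LimitingSubdiff {n : ℕ} (f : En n → ℝ) (x : En n) : Set (En n) :=
  {v | ∃ xs vs : ℕ → En n,
        (∀ k, vs k ∈ FrechetSubdiff f (xs k)) ∧
        Tendsto xs atTop (𝓝 x) ∧
        Tendsto (fun k => f (xs k)) atTop (𝓝 (f x)) ∧
        MapClusterPt v atTop vs}

def slopeAt {n : ℕ} (f : En n → ℝ) (x : En n) : ℝ≥0∞ :=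
  ⨅ v ∈ LimitingSubdiff f x, (‖v‖₊ : ℝ≥0∞)

def PalaisSmaleAt {n : ℕ} (f : En n → ℝ) (t : ℝ) : Prop :=
  ∀ xs : ℕ → En n,
    Tendsto (fun k => f (xs k)) atTop (𝓝 t) →
    Tendsto (fun k => slopeAt f (xs k)) atTop (𝓝 0) →
    ∃ (x : En n) (φ : ℕ → ℕ), StrictMono φ ∧ Tendsto (xs ∘ φ) atTop (𝓝 x)

def GoodAtInfinity {n : ℕ} (f : En n → ℝ) : Prop :=
  ∃ c > (0:ℝ), ∃ R > (0:ℝ), ∀ x : En n, 0 < f x → R ≤ ‖x‖ →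
    ENNReal.ofReal c ≤ slopeAt f x

def expVec {n : ℕ} (κ : Fin n →₀ ℕ) : Fin n → ℝ := fun i => (κ i : ℝ)

def NP {n : ℕ} (f : MvPolynomial (Fin n) ℝ) : Set (Fin n → ℝ) :=
  convexHull ℝ ((expVec '' (f.support : Set (Fin n →₀ ℕ))) ∪ {0})

def IsNPAtInfinity {n : ℕ} (Γ : Set (Fin n → ℝ)) : Prop :=
  ∃ A : Finset (Fin n → ℕ),
    Γ = convexHull ℝ (((fun (κ : Fin n → ℕ) (i : Fin n) => (κ i : ℝ)) '' A) ∪ {0})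

def ConvenientSet {n : ℕ} (Γ : Set (Fin n → ℝ)) : Prop :=
  ∀ j : Fin n, ∃ m : ℕ, 0 < m ∧ (fun i => if i = j then (m : ℝ) else 0) ∈ Γ

def Convenient {n : ℕ} (f : MvPolynomial (Fin n) ℝ) : Prop := ConvenientSet (NP f)

def faceOf {n : ℕ} (q : Fin n → ℝ) (Γ : Set (Fin n → ℝ)) : Set (Fin n → ℝ) :=
  {κ | κ ∈ Γ ∧ ∀ κ' ∈ Γ, ∑ j, q j * κ j ≤ ∑ j, q j * κ' j}

def IsFace {n : ℕ} (Δ Γ : Set (Fin n → ℝ)) : Prop := ∃ q : Fin n → ℝ, Δ = faceOf q Γ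

open Classical in
def principalPart {n : ℕ} (f : MvPolynomial (Fin n) ℝ) (Δ : Set (Fin n → ℝ)) :
    MvPolynomial (Fin n) ℝ :=
  ∑ κ ∈ f.support, if expVec κ ∈ Δ then MvPolynomial.monomial κ (MvPolynomial.coeff κ f) else 0

def Mmat {n p : ℕ} (f : Fin p → MvPolynomial (Fin n) ℝ) (q : Fin n → ℝ) (x : Fin n → ℝ) :
    Matrix (Fin p) (Fin n ⊕ Fin p) ℝ :=
  fun i => Sum.elim
    (fun j => x j *
      MvPolynomial.eval x (MvPolynomial.pderiv j (principalPart (f i) (faceOf q (NP (f i))))))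
    (fun i' => if i' = i
      then MvPolynomial.eval x (principalPart (f i) (faceOf q (NP (f i)))) else 0)

def NondegenerateAtInfinity {n p : ℕ} (f : Fin p → MvPolynomial (Fin n) ℝ) : Prop :=
  ∀ q : Fin n → ℝ, (0 : Fin n → ℝ) ∉ faceOf q (∑ i, NP (f i)) →
    ∀ x : Fin n → ℝ, (∀ j, x j ≠ 0) → (Mmat f q x).rank = p

def Hcon (d n p : ℕ) : ℕ := d * (6 * d - 3) ^ (n + p - 1)

def fmax {n p : ℕ} (f : Fin p → MvPolynomial (Fin n) ℝ) (x : En n) : ℝ :=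
  ⨆ i, MvPolynomial.eval (fun j => x j) (f i)

lemma frechet_subset_limiting {n : ℕ} (f : En n → ℝ) (z v : En n)
    (h : v ∈ FrechetSubdiff f z) : v ∈ LimitingSubdiff f z :=
  ⟨fun _ => z, fun _ => v, fun _ => h, tendsto_const_nhds, tendsto_const_nhds,
    Filter.Tendsto.mapClusterPt tendsto_const_nhds⟩

set_option maxHeartbeats 1000000 in
/-- a uniform positive lower bound on the nonsmooth slope on
`{f > 0}` yields a linear global error bound. -/
theorem stmt_6 (n : ℕ) (f : En n → ℝ) (hcont : Continuous f) (hsa : IsSAFun f)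
    (S : Set (En n)) (hS : S = {x | f x ≤ 0}) (hne : S.Nonempty)
    (c : ℝ) (hc : 0 < c)
    (hslope : ∀ x : En n, 0 < f x → ENNReal.ofReal c ≤ slopeAt f x) :
    ∀ x : En n, c * infDist x S ≤ max (f x) 0 := by
  intro x
  rcases le_or_gt (f x) 0 with hfx | hfx
  · have hxS : x ∈ S := by rw [hS]; exact hfx
    rw [infDist_zero_of_mem hxS]
    simp
  · rw [max_eq_left hfx.le]
    by_contra hcon'
    push_neg at hcon'
    set D := infDist x S with hDdef
    have hDnn : 0 ≤ D := infDist_nonneg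
    have hD0 : 0 < D := by
      by_contra hD'
      push_neg at hD'
      have : c * D ≤ 0 := mul_nonpos_of_nonneg_of_nonpos hc.le hD'
      linarith
    set c' : ℝ := (f x / D + c) / 2 with hc'def
    have hfD : 0 < f x / D := div_pos hfx hD0
    have h1 : f x / D < c := (div_lt_iff₀ hD0).2 (by linarith)
    have hc'0 : 0 < c' := by rw [hc'def]; linarith
    have hc'c : c' < c := by rw [hc'def]; linarith
    have hfDc' : f x / D < c' := by rw [hc'def]; linarith
    have hfc'D : f x / c' < D := by
      rw [div_lt_iff₀ hc'0]
      have := (div_lt_iff₀ hD0).1 hfDc'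
      linarith [this]
    have hfc'0 : 0 < f x / c' := div_pos hfx hc'0
    set R : ℝ := (f x / c' + D) / 2 with hRdef
    have hfxR : f x / c' < R := by rw [hRdef]; linarith
    have hRD : R < D := by rw [hRdef]; linarith
    have hR0 : 0 < R := by rw [hRdef]; linarith
    set ρ : ℝ := R - f x / c' with hrhodef
    have hρ0 : 0 < ρ := by rw [hrhodef]; linarith
    set lam : ℝ := f x / ρ ^ 2 + 1 with hlamdef
    have hlam0 : 0 < lam := by rw [hlamdef]; positivity
    have hball : ∀ z : En n, dist z x ≤ R → 0 < f z := by
      intro z hz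
      by_contra hfz
      push_neg at hfz
      have hzS : z ∈ S := by rw [hS]; exact hfz
      have h4 : D ≤ dist x z := infDist_le_dist_of_mem hzS
      rw [dist_comm] at h4
      linarith
    have hφcont : Continuous (fun p : En n × En n =>
        f p.1 + c' * ‖p.2 - x‖ + lam * ‖p.1 - p.2‖ ^ 2) := by
      apply Continuous.add
      apply Continuous.add
      · exact hcont.comp continuous_fst
      · exact continuous_const.mul ((continuous_snd.sub continuous_const).norm)
      · exact continuous_const.mul (((continuous_fst.sub continuous_snd).norm).pow 2)
    have hcomp : IsCompact ((closedBall x R) ×ˢ (closedBall x R)) :=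
      (isCompact_closedBall x R).prod (isCompact_closedBall x R)
    have hnonempty : ((closedBall x R) ×ˢ (closedBall x R)).Nonempty :=
      ⟨(x, x), ⟨mem_closedBall_self hR0.le, mem_closedBall_self hR0.le⟩⟩
    obtain ⟨⟨z₀, w₀⟩, hpB, hmin'⟩ := hcomp.exists_isMinOn hnonempty hφcont.continuousOn
    have hmin := isMinOn_iff.mp hmin'
    obtain ⟨hz₀B, hw₀B⟩ := hpB
    set d : ℝ := ‖z₀ - w₀‖ with hddef
    have hdnn : 0 ≤ d := norm_nonneg _
    have hval : f z₀ + c' * ‖w₀ - x‖ + lam * d ^ 2 ≤ f x := by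
      have := hmin (x, x) ⟨mem_closedBall_self hR0.le, mem_closedBall_self hR0.le⟩
      simpa using this
    have hfz₀ : 0 < f z₀ := hball z₀ (mem_closedBall.mp hz₀B)
    have hwnn : 0 ≤ c' * ‖w₀ - x‖ := mul_nonneg hc'0.le (norm_nonneg _)
    have hdsq : lam * d ^ 2 ≤ f x := by linarith
    have hwx : ‖w₀ - x‖ < f x / c' := by
      rw [lt_div_iff₀ hc'0]
      nlinarith [mul_nonneg hlam0.le (sq_nonneg d)]
    have hcan : f x / ρ ^ 2 * ρ ^ 2 = f x := div_mul_cancel₀ _ (by positivity)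
    have hdsq' : (f x / ρ ^ 2 + 1) * d ^ 2 ≤ f x := by rw [hlamdef] at hdsq; exact hdsq
    have hdρ : d < ρ := by
      by_contra hge
      push_neg at hge
      have h6 : ρ ^ 2 ≤ d ^ 2 := by nlinarith
      have h7 : f x / ρ ^ 2 * ρ ^ 2 ≤ f x / ρ ^ 2 * d ^ 2 :=
        mul_le_mul_of_nonneg_left h6 (div_nonneg hfx.le (sq_nonneg ρ))
      have h8 : 0 < ρ ^ 2 := by positivity
      linarith
    have hz₀x : ‖z₀ - x‖ < R := by
      have htri : ‖z₀ - x‖ ≤ ‖z₀ - w₀‖ + ‖w₀ - x‖ := by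
        have := dist_triangle z₀ w₀ x
        simpa [dist_eq_norm] using this
      rw [hrhodef] at hdρ
      linarith
    set v : En n := (2 * lam) • (w₀ - z₀) with hvdef
    have hveq : ‖v‖ = 2 * lam * d := by
      rw [hvdef, norm_smul, Real.norm_eq_abs, abs_of_pos (by linarith), norm_sub_rev]
    have hvnorm : ‖v‖ ≤ c' := by
      rw [hveq]
      by_contra hcv
      push_neg at hcv
      have hd0 : 0 < d := by nlinarith
      have hzw0 : z₀ - w₀ ≠ 0 := by
        rw [← norm_pos_iff, ← hddef]; exact hd0
      set u : En n := d⁻¹ • (z₀ - w₀) with hudef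
      have hu1 : ‖u‖ = 1 := by
        rw [hudef, norm_smul, Real.norm_eq_abs, abs_of_pos (by positivity), ← hddef]
        field_simp
      have hinner : ⟪z₀ - w₀, u⟫ = d := by
        rw [hudef, real_inner_smul_right, real_inner_self_eq_norm_sq, ← hddef, sq]
        field_simp
      set t : ℝ := min ((2 * lam * d - c') / (2 * lam)) (R - ‖w₀ - x‖) with htdef
      have ht0 : 0 < t := by
        apply lt_min
        · apply div_pos (by linarith) (by linarith)
        · linarith [hwx, hfxR]
      have h2lamt : 2 * lam * t ≤ 2 * lam * d - c' := by
        have := min_le_left ((2 * lam * d - c') / (2 * lam)) (R - ‖w₀ - x‖)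
        rw [← htdef] at this
        have h2l : (0:ℝ) < 2 * lam := by linarith
        calc 2 * lam * t ≤ 2 * lam * ((2 * lam * d - c') / (2 * lam)) := by
              exact mul_le_mul_of_nonneg_left this h2l.le
          _ = 2 * lam * d - c' := by field_simp
      have htR : t ≤ R - ‖w₀ - x‖ := min_le_right _ _
      have hw'B : w₀ + t • u ∈ closedBall x R := by
        rw [mem_closedBall, dist_eq_norm]
        have : w₀ + t • u - x = (w₀ - x) + t • u := by abel
        rw [this]
        calc ‖(w₀ - x) + t • u‖ ≤ ‖w₀ - x‖ + ‖t • u‖ := norm_add_le _ _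
          _ = ‖w₀ - x‖ + t := by
              rw [norm_smul, hu1, Real.norm_eq_abs, abs_of_pos ht0, mul_one]
          _ ≤ R := by linarith
      have happ := hmin (z₀, w₀ + t • u) ⟨hz₀B, hw'B⟩
      simp only at happ
      have hexp : ‖z₀ - (w₀ + t • u)‖ ^ 2 = d ^ 2 - 2 * t * d + t ^ 2 := by
        rw [sub_add_eq_sub_sub, norm_sub_sq_real, real_inner_smul_right, hinner,
          norm_smul, hu1, Real.norm_eq_abs, mul_one, sq_abs, ← hddef]
        ring
      rw [hexp] at happ
      have hw'x : ‖w₀ + t • u - x‖ ≤ ‖w₀ - x‖ + t := by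
        have h5 : w₀ + t • u - x = (w₀ - x) + t • u := by abel
        rw [h5]
        calc ‖(w₀ - x) + t • u‖ ≤ ‖w₀ - x‖ + ‖t • u‖ := norm_add_le _ _
          _ = ‖w₀ - x‖ + t := by
              rw [norm_smul, hu1, Real.norm_eq_abs, abs_of_pos ht0, mul_one]
      have hprod : 0 ≤ t * (c' + lam * t - 2 * lam * d) := by
        nlinarith [mul_le_mul_of_nonneg_left hw'x hc'0.le]
      have hkey : 0 ≤ c' + lam * t - 2 * lam * d :=
        (mul_nonneg_iff_of_pos_left ht0).mp hprod
      linarith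
    have hfre : v ∈ FrechetSubdiff f z₀ := by
      intro ε hε
      refine ⟨min (ε / lam) (R - ‖z₀ - x‖), lt_min (div_pos hε hlam0) (by linarith), ?_⟩
      intro h hh0 hhδ
      have hhε : ‖h‖ < ε / lam := lt_of_lt_of_le hhδ (min_le_left _ _)
      have hhR : ‖h‖ < R - ‖z₀ - x‖ := lt_of_lt_of_le hhδ (min_le_right _ _)
      have hhball : z₀ + h ∈ closedBall x R := by
        rw [mem_closedBall, dist_eq_norm]
        have h5 : z₀ + h - x = (z₀ - x) + h := by abel
        rw [h5]
        calc ‖(z₀ - x) + h‖ ≤ ‖z₀ - x‖ + ‖h‖ := norm_add_le _ _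
          _ ≤ R := by linarith
      have happ := hmin (z₀ + h, w₀) ⟨hhball, hw₀B⟩
      simp only at happ
      have hexp : ‖z₀ + h - w₀‖ ^ 2 = d ^ 2 + 2 * ⟪z₀ - w₀, h⟫ + ‖h‖ ^ 2 := by
        have h5 : z₀ + h - w₀ = (z₀ - w₀) + h := by abel
        rw [h5, norm_add_sq_real, ← hddef]
      rw [hexp] at happ
      have hvh : ⟪v, h⟫ = -(2 * lam * ⟪z₀ - w₀, h⟫) := by
        rw [hvdef, real_inner_smul_left, show w₀ - z₀ = -(z₀ - w₀) from (neg_sub z₀ w₀).symm,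
          inner_neg_left]
        ring
      rw [hvh]
      have hsq : lam * ‖h‖ ^ 2 ≤ ε * ‖h‖ := by
        have hcan2 : lam * (ε / lam) = ε := mul_div_cancel₀ _ (by linarith)
        have h9 : lam * ‖h‖ ≤ ε := by
          calc lam * ‖h‖ ≤ lam * (ε / lam) := mul_le_mul_of_nonneg_left hhε.le hlam0.le
            _ = ε := hcan2
        calc lam * ‖h‖ ^ 2 = (lam * ‖h‖) * ‖h‖ := by ring
          _ ≤ ε * ‖h‖ := mul_le_mul_of_nonneg_right h9 (norm_nonneg h)
      linarith
    have hlimv : v ∈ LimitingSubdiff f z₀ := frechet_subset_limiting f z₀ v hfre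
    have hs1 := hslope z₀ hfz₀
    have hs2 : slopeAt f z₀ ≤ (‖v‖₊ : ℝ≥0∞) := by
      unfold slopeAt
      exact iInf₂_le v hlimv
    have hs3 : ENNReal.ofReal c ≤ ENNReal.ofReal ‖v‖ := by
      rw [ofReal_norm]
      exact hs1.trans hs2
    have hs4 : c ≤ ‖v‖ := (ENNReal.ofReal_le_ofReal_iff (norm_nonneg v)).1 hs3
    linarith


end
end

section
/- Let f(x) := (1/2)xᵀAx + xᵀb + c be a quadratic function on ℝⁿ, where A ∈ ℝ^{n×n} is a nonzero symmetric matrix, b ∈ ℝⁿ and c ∈ ℝ. Let x̄ ∈ ℝⁿ satisfy ∇f(x̄) = Ax̄ + b = 0. Then for all x ∈ ℝⁿ, (√(2λ(A))/2)·d(x, f⁻¹(f(x̄))) ≤ |f(x) − f(x̄)|^{1/2}, where λ(A) denotes the minimum of |λ_i| over the nonzero eigenvalues λ_i of A. -/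
open Filter Topology Metric Set Pointwise
open scoped RealInnerProductSpace ENNReal

noncomputable section

open Finset in
lemma pure_aux {n : ℕ} (lam : ℝ) (hlam : 0 < lam) (μ c : Fin n → ℝ)
    (hμ : ∀ i, 0 < μ i → lam ≤ μ i) (hS : 0 ≤ ∑ i, μ i * c i ^ 2) :
    ∃ d : Fin n → ℝ, (∑ i, μ i * d i ^ 2) = 0 ∧
      lam * ∑ i, (c i - d i) ^ 2 ≤ ∑ i, μ i * c i ^ 2 := by
  classical
  set S := ∑ i, μ i * c i ^ 2 with hSdef
  set P : Finset (Fin n) := univ.filter (fun i => 0 < μ i) with hP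
  set Sp := ∑ i ∈ P, μ i * c i ^ 2 with hSp
  have hsplit : S = Sp + ∑ i ∈ Pᶜ, μ i * c i ^ 2 := by
    rw [hSp, Finset.sum_add_sum_compl]
  have hSpnn : 0 ≤ Sp := Finset.sum_nonneg (fun i hi => by
    have : 0 < μ i := (Finset.mem_filter.mp hi).2
    positivity)
  have hSm : ∑ i ∈ Pᶜ, μ i * c i ^ 2 ≤ 0 := Finset.sum_nonpos (fun i hi => by
    have : ¬ 0 < μ i := by
      simp only [hP, Finset.mem_compl, Finset.mem_filter, Finset.mem_univ, true_and] at hi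
      exact hi
    nlinarith [sq_nonneg (c i)])
  rcases eq_or_lt_of_le hSpnn with h0 | hSppos
  · have hS0 : S = 0 := by
      have : S ≤ 0 := by rw [hsplit, ← h0]; simpa using hSm
      linarith
    exact ⟨c, by simpa [hSdef] using hS0, by simp [hS]⟩
  · set t := Real.sqrt ((Sp - S) / Sp) with ht
    have hSms : Sp - S = -∑ i ∈ Pᶜ, μ i * c i ^ 2 := by rw [hsplit]; ring
    have hnum0 : 0 ≤ Sp - S := by rw [hSms]; linarith
    have hnum1 : Sp - S ≤ Sp := by linarith
    have ht0 : 0 ≤ t := Real.sqrt_nonneg _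
    have ht2 : t ^ 2 = (Sp - S) / Sp := Real.sq_sqrt (by positivity)
    have ht1 : t ≤ 1 := by
      rw [ht]
      have : (Sp - S) / Sp ≤ 1 := by rw [div_le_one hSppos]; exact hnum1
      calc Real.sqrt ((Sp - S)/Sp) ≤ Real.sqrt 1 := Real.sqrt_le_sqrt this
        _ = 1 := Real.sqrt_one
    refine ⟨fun i => if 0 < μ i then t * c i else c i, ?_, ?_⟩
    · have : (∑ i, μ i * (if 0 < μ i then t * c i else c i) ^ 2)
          = t ^ 2 * Sp + ∑ i ∈ Pᶜ, μ i * c i ^ 2 := by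
        rw [← Finset.sum_add_sum_compl P, Finset.mul_sum]
        congr 1
        · apply Finset.sum_congr rfl
          intro i hi
          have : 0 < μ i := (Finset.mem_filter.mp hi).2
          simp [this]; ring
        · apply Finset.sum_congr rfl
          intro i hi
          have : ¬ 0 < μ i := by
            simp only [hP, Finset.mem_compl, Finset.mem_filter, Finset.mem_univ, true_and] at hi
            exact hi
          simp [this]
      rw [this, ht2]
      field_simp
      linarith [hSms]
    · have hsum : (∑ i, (c i - (if 0 < μ i then t * c i else c i)) ^ 2)
          = (1 - t)^2 * ∑ i ∈ P, c i ^ 2 := by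
        rw [← Finset.sum_add_sum_compl P, Finset.mul_sum]
        have h2 : ∑ i ∈ Pᶜ, (c i - (if 0 < μ i then t * c i else c i)) ^ 2 = 0 := by
          apply Finset.sum_eq_zero
          intro i hi
          have : ¬ 0 < μ i := by
            simp only [hP, Finset.mem_compl, Finset.mem_filter, Finset.mem_univ, true_and] at hi
            exact hi
          simp [this]
        rw [h2, add_zero]
        apply Finset.sum_congr rfl
        intro i hi
        have : 0 < μ i := (Finset.mem_filter.mp hi).2
        simp [this]; ring
      have hcP : lam * ∑ i ∈ P, c i ^ 2 ≤ Sp := by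
        rw [hSp, Finset.mul_sum]
        apply Finset.sum_le_sum
        intro i hi
        have hμi : 0 < μ i := (Finset.mem_filter.mp hi).2
        have := hμ i hμi
        nlinarith [sq_nonneg (c i)]
      rw [hsum]
      have hfin : (1 - t)^2 * Sp ≤ S := by
        have h1 : t^2 * Sp = Sp - S := by rw [ht2]; field_simp
        nlinarith
      calc lam * ((1-t)^2 * ∑ i ∈ P, c i ^2) = (1-t)^2 * (lam * ∑ i ∈ P, c i ^2) := by ring
        _ ≤ (1-t)^2 * Sp := by nlinarith [sq_nonneg (1-t)]
        _ ≤ S := hfin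

lemma pure_main {n : ℕ} (lam : ℝ) (hlam : 0 < lam) (μ c : Fin n → ℝ)
    (hμ : ∀ i, μ i ≠ 0 → lam ≤ |μ i|) :
    ∃ d : Fin n → ℝ, (∑ i, μ i * d i ^ 2) = 0 ∧
      lam * ∑ i, (c i - d i) ^ 2 ≤ |∑ i, μ i * c i ^ 2| := by
  rcases le_or_gt 0 (∑ i, μ i * c i ^ 2) with h | h
  · obtain ⟨d, hd1, hd2⟩ := pure_aux lam hlam μ c (fun i hi => by
      have := hμ i (ne_of_gt hi); rwa [abs_of_pos hi] at this) h
    exact ⟨d, hd1, by rwa [abs_of_nonneg h]⟩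
  · obtain ⟨d, hd1, hd2⟩ := pure_aux lam hlam (fun i => -μ i) c (fun i hi => by
      have hi' : 0 < -μ i := hi
      have hne : μ i ≠ 0 := by intro h0; rw [h0] at hi'; simp at hi'
      have := hμ i hne
      rw [abs_of_neg (by linarith : μ i < 0)] at this
      show lam ≤ -μ i
      linarith) (by simp only [neg_mul, Finset.sum_neg_distrib]; linarith)
    refine ⟨d, ?_, ?_⟩
    · have : -∑ i, μ i * d i ^ 2 = 0 := by
        rw [← Finset.sum_neg_distrib]; simpa [neg_mul] using hd1
      linarith
    · rw [abs_of_neg h]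
      simpa [neg_mul, Finset.sum_neg_distrib] using hd2


section spectral
variable {n : ℕ} {A : Matrix (Fin n) (Fin n) ℝ} (hH : A.IsHermitian)

lemma quad_eq (w : EuclideanSpace ℝ (Fin n)) :
    dotProduct (fun j => w j) (A.mulVec (fun j => w j)) =
      ∑ i, hH.eigenvalues i * (hH.eigenvectorBasis.repr w i) ^ 2 := by
  set B := hH.eigenvectorBasis with hB
  have h1 : Matrix.toEuclideanLin A w = ∑ i, (B.repr w i * hH.eigenvalues i) • B i := by
    conv_lhs => rw [← B.sum_repr w]
    rw [map_sum]
    apply Finset.sum_congr rfl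
    intro i _
    rw [map_smul]
    have h2 : Matrix.toEuclideanLin A (B i) = hH.eigenvalues i • B i := by
      apply (WithLp.equiv 2 _).injective
      simp only [Matrix.toEuclideanLin_apply, Equiv.apply_symm_apply, WithLp.ofLp_smul]
      exact hH.mulVec_eigenvectorBasis i
    rw [h2, smul_smul]
  have h3 : dotProduct (fun j => w j) (A.mulVec (fun j => w j))
      = ⟪w, Matrix.toEuclideanLin A w⟫ := by
    rw [PiLp.inner_apply]
    simp only [Matrix.toEuclideanLin_apply, RCLike.inner_apply, conj_trivial,
      dotProduct]
    exact Finset.sum_congr rfl fun i _ => mul_comm _ _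
  rw [h3, h1, inner_sum]
  apply Finset.sum_congr rfl
  intro i _
  rw [real_inner_smul_right, real_inner_comm, ← OrthonormalBasis.repr_apply_apply]
  ring
end spectral

/-- Hölder-type global error bound for the level set of a quadratic
function through a critical point. -/
theorem stmt_7 (n : ℕ) (A : Matrix (Fin n) (Fin n) ℝ) (hsymm : A.IsSymm) (hA : A ≠ 0)
    (b : Fin n → ℝ) (c : ℝ) (f : En n → ℝ)
    (hf : ∀ x : En n, f x =
      (1/2) * dotProduct (fun j => x j) (A.mulVec (fun j => x j)) +
        dotProduct (fun j => x j) b + c)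
    (xbar : En n) (hxbar : A.mulVec (fun j => xbar j) + b = 0)
    (lam : ℝ)
    (hlam : lam = sInf {r : ℝ | ∃ μ : ℝ, μ ≠ 0 ∧
      Module.End.HasEigenvalue (Matrix.toLin' A) μ ∧ r = |μ|}) :
    ∀ x : En n,
      (Real.sqrt (2 * lam) / 2) * infDist x (f ⁻¹' {f xbar}) ≤
        Real.sqrt |f x - f xbar| := by
  intro x
  by_cases hpos : 0 < lam
  swap
  · have h2 : Real.sqrt (2 * lam) = 0 := Real.sqrt_eq_zero'.mpr (by push_neg at hpos; linarith)
    rw [h2]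
    simp only [zero_div, zero_mul]
    exact Real.sqrt_nonneg _
  -- setup
  have hH : A.IsHermitian := by
    exact Matrix.isHermitian_iff_isSymm.mpr hsymm
  set B := hH.eigenvectorBasis with hB
  set eig := hH.eigenvalues with heigdef
  -- difference formula
  have hsw : ∀ p q : Fin n → ℝ,
      dotProduct p (A.mulVec q) = dotProduct q (A.mulVec p) := by
    intro p q
    rw [Matrix.dotProduct_mulVec, ← Matrix.mulVec_transpose, hsymm.eq, dotProduct_comm]
  have hdiff : ∀ y : En n, f y - f xbar =
      1/2 * dotProduct (fun j => y j - xbar j)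
        (A.mulVec (fun j => y j - xbar j)) := by
    intro y
    have hb : b = -(A.mulVec fun j => xbar j) := eq_neg_of_add_eq_zero_right hxbar
    rw [hf y, hf xbar, hb]
    have hyx : (fun j => y j - xbar j) = (fun j => y j) - (fun j => xbar j) := rfl
    rw [hyx]
    simp only [Matrix.mulVec_sub, dotProduct_sub, sub_dotProduct,
      dotProduct_neg]
    have := hsw (fun j => y j) (fun j => xbar j)
    linarith
  -- eigenvalue bound
  have hlam_le : ∀ i, eig i ≠ 0 → lam ≤ |eig i| := by
    intro i hne
    have hev : Module.End.HasEigenvalue (Matrix.toLin' A) (eig i) := by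
      apply Module.End.hasEigenvalue_of_hasEigenvector (x := (fun j => B i j : Fin n → ℝ))
      constructor
      · rw [Module.End.mem_eigenspace_iff, Matrix.toLin'_apply]
        exact hH.mulVec_eigenvectorBasis i
      · intro h0
        apply B.orthonormal.ne_zero i
        have : ∀ j, B i j = 0 := fun j => congrFun h0 j
        ext j
        exact this j
    rw [hlam]
    apply csInf_le
    · exact ⟨0, fun r ⟨μ, _, _, hr⟩ => hr ▸ abs_nonneg μ⟩
    · exact ⟨eig i, hne, hev, rfl⟩
  -- main construction
  set v : En n := x - xbar with hv
  set cc : Fin n → ℝ := fun i => B.repr v i with hcc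
  obtain ⟨d, hd0, hdle⟩ := pure_main lam hpos eig cc hlam_le
  set u : En n := B.repr.symm (toE d) with hu
  have hrepru : ∀ i, B.repr u i = d i := by
    intro i
    rw [hu, LinearIsometryEquiv.apply_symm_apply]
    rfl
  set w : En n := xbar + u with hw
  have hfw : f w = f xbar := by
    have h1 := hdiff w
    have h2 : (fun j => w j - xbar j) = fun j => u j := by
      funext j
      show (xbar + u) j - xbar j = u j
      show xbar j + u j - xbar j = u j
      ring
    rw [h2] at h1
    have h3 : dotProduct (fun j => u j) (A.mulVec (fun j => u j))
        = ∑ i, eig i * (B.repr u i) ^ 2 := quad_eq hH u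
    simp only [hrepru] at h3
    rw [h3, hd0] at h1
    linarith
  have hwmem : w ∈ f ⁻¹' {f xbar} := by simp [hfw]
  have hdist : infDist x (f ⁻¹' {f xbar}) ≤ ‖v - u‖ := by
    have h4 : x - w = v - u := by rw [hw, hv]; abel
    calc infDist x (f ⁻¹' {f xbar}) ≤ dist x w := infDist_le_dist_of_mem hwmem
      _ = ‖x - w‖ := dist_eq_norm x w
      _ = ‖v - u‖ := by rw [h4]
  have hnorm2 : ‖v - u‖ ^ 2 = ∑ i, (cc i - d i) ^ 2 := by
    have h5 : ‖v - u‖ = ‖B.repr (v - u)‖ := (B.repr.norm_map (v - u)).symm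
    have h6 : ∀ i, B.repr (v - u) i = cc i - d i := by
      intro i
      rw [map_sub]
      show B.repr v i - B.repr u i = cc i - d i
      rw [hrepru, hcc]
    rw [h5, EuclideanSpace.norm_eq]
    rw [Real.sq_sqrt (by positivity)]
    apply Finset.sum_congr rfl
    intro i _
    rw [h6 i, Real.norm_eq_abs, sq_abs]
  -- quadratic value
  have hQx : f x - f xbar = 1/2 * ∑ i, eig i * cc i ^ 2 := by
    have h7 := hdiff x
    have h8 : (fun j => x j - xbar j) = fun j => v j := rfl
    rw [h8] at h7
    rw [h7, quad_eq hH v]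
  -- conclude
  set S := ∑ i, eig i * cc i ^ 2 with hS
  have habs : |f x - f xbar| = |S| / 2 := by rw [hQx, abs_mul, abs_of_pos (by norm_num : (0:ℝ) < 1/2)]; ring
  have hdnn : 0 ≤ infDist x (f ⁻¹' {f xbar}) := infDist_nonneg
  have hkey : (Real.sqrt (2 * lam) / 2 * infDist x (f ⁻¹' {f xbar})) ^ 2 ≤ |f x - f xbar| := by
    have h9 : (Real.sqrt (2 * lam)) ^ 2 = 2 * lam := Real.sq_sqrt (by linarith)
    have h10 : infDist x (f ⁻¹' {f xbar}) ^ 2 ≤ ‖v - u‖ ^ 2 := by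
      apply pow_le_pow_left₀ hdnn hdist
    rw [hnorm2] at h10
    have h11 : lam * infDist x (f ⁻¹' {f xbar}) ^ 2 ≤ |S| := by
      calc lam * infDist x (f ⁻¹' {f xbar}) ^ 2 ≤ lam * ∑ i, (cc i - d i) ^ 2 := by
            apply mul_le_mul_of_nonneg_left h10 (le_of_lt hpos)
        _ ≤ |S| := hdle
    rw [habs]
    rw [mul_pow, div_pow, h9]
    nlinarith
  have := Real.sqrt_le_sqrt hkey
  rwa [Real.sqrt_sq (by positivity)] at this

end
end

section
/- Let f(x) := (1/2)xᵀAx + xᵀb + c be a quadratic function on ℝⁿ, where A ∈ ℝ^{n×n} is a nonzero symmetric matrix, b ∈ ℝⁿ and c ∈ ℝ, and let x̄ ∈ ℝⁿ satisfy Ax̄ + b = 0. Then the gradient inequality √(2λ(A))·|f(x) − f(x̄)|^{1/2} ≤ ‖∇f(x)‖ = ‖Ax + b‖ holds for all x ∈ ℝⁿ, where λ(A) denotes the minimum of |λ_i| over the nonzero eigenvalues λ_i of A. -/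
open Filter Topology Metric Set Pointwise
open scoped RealInnerProductSpace ENNReal

noncomputable section

/-- gradient inequality for a quadratic function through a critical
point. -/
theorem stmt_8 (n : ℕ) (A : Matrix (Fin n) (Fin n) ℝ) (hsymm : A.IsSymm) (hA : A ≠ 0)
    (b : Fin n → ℝ) (c : ℝ) (f : En n → ℝ)
    (hf : ∀ x : En n, f x =
      (1/2) * dotProduct (fun j => x j) (A.mulVec (fun j => x j)) +
        dotProduct (fun j => x j) b + c)
    (xbar : En n) (hxbar : A.mulVec (fun j => xbar j) + b = 0)
    (lam : ℝ)
    (hlam : lam = sInf {r : ℝ | ∃ μ : ℝ, μ ≠ 0 ∧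
      Module.End.HasEigenvalue (Matrix.toLin' A) μ ∧ r = |μ|}) :
    ∀ x : En n,
      Real.sqrt (2 * lam) * Real.sqrt |f x - f xbar| ≤
        ‖toE (A.mulVec (fun j => x j) + b)‖ := by
  -- symmetry lemma for dot products
  have dot_symm : ∀ a c : Fin n → ℝ,
      dotProduct a (A.mulVec c) = dotProduct c (A.mulVec a) := by
    intro a c
    simp only [dotProduct, Matrix.mulVec, Finset.mul_sum]
    rw [Finset.sum_comm]
    refine Finset.sum_congr rfl fun i _ => Finset.sum_congr rfl fun j _ => ?_
    have : A j i = A i j := by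
      conv_lhs => rw [← hsymm]
      rfl
    rw [this]; ring
  have hb : b = -A.mulVec (fun j => xbar j) := (neg_eq_of_add_eq_zero_right hxbar).symm
  -- Hermitian
  have hH : A.IsHermitian := by
    rw [Matrix.IsHermitian, Matrix.conjTranspose_eq_transpose_of_trivial]
    exact hsymm
  set u := hH.eigenvectorBasis with hu
  set μ := hH.eigenvalues with hμ
  -- lam is nonneg
  have hS : ∀ r ∈ {r : ℝ | ∃ μ : ℝ, μ ≠ 0 ∧
      Module.End.HasEigenvalue (Matrix.toLin' A) μ ∧ r = |μ|}, (0:ℝ) ≤ r := by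
    rintro r ⟨m, -, -, rfl⟩; exact abs_nonneg m
  have hlam0 : 0 ≤ lam := hlam ▸ Real.sInf_nonneg hS
  -- lam ≤ |μ i| for nonzero eigenvalues
  have hlam_le : ∀ i : Fin n, μ i ≠ 0 → lam ≤ |μ i| := by
    intro i hne
    rw [hlam]
    refine csInf_le ⟨0, hS⟩ ?_
    refine ⟨μ i, hne, ?_, rfl⟩
    refine Module.End.hasEigenvalue_of_hasEigenvector (x := (u i : Fin n → ℝ)) ⟨?_, ?_⟩
    · rw [Module.End.mem_eigenspace_iff, Matrix.toLin'_apply]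
      exact hH.mulVec_eigenvectorBasis i
    · exact fun h => u.orthonormal.ne_zero i (by simpa using congrArg (WithLp.toLp 2) h)
  intro x
  -- set up y
  set yE : En n := x - xbar with hyE
  set y : Fin n → ℝ := fun j => x j - xbar j with hy
  have hyEy : ∀ j, yE j = y j := fun j => rfl
  have hgrad : A.mulVec (fun j => x j) + b = A.mulVec y := by
    rw [hb]
    funext j
    simp [Matrix.mulVec, dotProduct, hy, mul_sub, Finset.sum_sub_distrib]
    ring
  rw [hgrad]
  set AyE : En n := toE (A.mulVec y) with hAyE
  -- coordinates
  set cc : Fin n → ℝ := fun i => ⟪(u i : En n), yE⟫ with hcc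
  have hinner_dot : ∀ v w : En n,
      ⟪v, w⟫ = dotProduct (fun j => v j) (fun j => w j) := by
    intro v w
    simp [PiLp.inner_apply, dotProduct]
    exact Finset.sum_congr rfl fun _ _ => mul_comm _ _
  have hAcoord : ∀ i, ⟪(u i : En n), AyE⟫ = μ i * cc i := by
    intro i
    have hcci : cc i = dotProduct y (fun j => (u i : En n) j) := by
      have h1 : cc i = ⟪(u i : En n), yE⟫ := rfl
      rw [h1, real_inner_comm, hinner_dot]
      rfl
    rw [hinner_dot]
    have h2 : dotProduct (fun j => (u i : En n) j) (fun j => AyE j)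
        = dotProduct (fun j => (u i : En n) j) (A.mulVec y) := rfl
    rw [h2, dot_symm]
    have hmv : A.mulVec (fun j => (u i : En n) j) = μ i • (fun j => (u i : En n) j) :=
      hH.mulVec_eigenvectorBasis i
    rw [hmv, dotProduct_smul, smul_eq_mul, hcci]
  have hycoord : ∀ i, ⟪(u i : En n), yE⟫ = cc i := fun i => rfl
  -- norms and quadratic forms via Parseval
  have hnorm : ‖AyE‖ ^ 2 = ∑ i, (μ i * cc i) ^ 2 := by
    have := u.sum_inner_mul_inner AyE AyE
    rw [← real_inner_self_eq_norm_sq, ← this]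
    refine Finset.sum_congr rfl fun i _ => ?_
    have h1 : ⟪AyE, (u i : En n)⟫ = μ i * cc i := by
      rw [real_inner_comm]; exact hAcoord i
    rw [h1, hAcoord i]; ring
  have hquad : ⟪yE, AyE⟫ = ∑ i, μ i * cc i ^ 2 := by
    rw [← u.sum_inner_mul_inner yE AyE]
    refine Finset.sum_congr rfl fun i _ => ?_
    have h2 : ⟪yE, (u i : En n)⟫ = cc i := real_inner_comm _ _
    rw [h2, hAcoord i]; ring
  -- f x - f xbar = 1/2 ⟪yE, AyE⟫
  have hfd : f x - f xbar = (1/2) * ⟪yE, AyE⟫ := by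
    rw [hf x, hf xbar, hb]
    have h1 : ⟪yE, AyE⟫ = dotProduct y (A.mulVec y) := by
      rw [hinner_dot]; rfl
    rw [h1]
    have hysub : y = (fun j => x j) - (fun j => xbar j) := by funext j; simp [hy]
    rw [hysub, Matrix.mulVec_sub, dotProduct_sub, sub_dotProduct,
      sub_dotProduct]
    rw [dot_symm (fun j => xbar j) (fun j => x j)]
    simp only [dotProduct_neg]
    ring
  -- key inequality: 2*lam*|f x - f xbar| ≤ ‖AyE‖^2
  have hkey : 2 * lam * |f x - f xbar| ≤ ‖AyE‖ ^ 2 := by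
    rw [hfd, hnorm, hquad]
    have habs : |(1/2 : ℝ) * ∑ i, μ i * cc i ^ 2| ≤ (1/2) * ∑ i, |μ i| * cc i ^ 2 := by
      rw [abs_mul, abs_of_pos (by norm_num : (0:ℝ) < 1/2)]
      gcongr
      calc |∑ i, μ i * cc i ^ 2| ≤ ∑ i, |μ i * cc i ^ 2| := Finset.abs_sum_le_sum_abs _ _
        _ = ∑ i, |μ i| * cc i ^ 2 := by
            refine Finset.sum_congr rfl fun i _ => ?_
            rw [abs_mul, abs_of_nonneg (sq_nonneg (cc i))]
    calc 2 * lam * |(1/2 : ℝ) * ∑ i, μ i * cc i ^ 2|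
        ≤ 2 * lam * ((1/2) * ∑ i, |μ i| * cc i ^ 2) := by
          apply mul_le_mul_of_nonneg_left habs (by linarith)
      _ = lam * ∑ i, |μ i| * cc i ^ 2 := by ring
      _ = ∑ i, lam * (|μ i| * cc i ^ 2) := Finset.mul_sum _ _ _
      _ ≤ ∑ i, (μ i * cc i) ^ 2 := by
          refine Finset.sum_le_sum fun i _ => ?_
          rcases eq_or_ne (μ i) 0 with h | h
          · simp [h]
          · have h1 : lam * |μ i| ≤ |μ i| * |μ i| :=
              mul_le_mul_of_nonneg_right (hlam_le i h) (abs_nonneg _)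
            have h2 : |μ i| * |μ i| = μ i ^ 2 := by rw [← abs_mul, ← sq, abs_of_nonneg (sq_nonneg _)]
            calc lam * (|μ i| * cc i ^ 2) = (lam * |μ i|) * cc i ^ 2 := by ring
              _ ≤ (μ i ^ 2) * cc i ^ 2 := by
                  apply mul_le_mul_of_nonneg_right _ (sq_nonneg _)
                  rw [← h2]; exact h1
              _ = (μ i * cc i) ^ 2 := by ring
  -- conclude
  have h2lam : 0 ≤ 2 * lam := by linarith
  calc Real.sqrt (2 * lam) * Real.sqrt |f x - f xbar|
      = Real.sqrt (2 * lam * |f x - f xbar|) := (Real.sqrt_mul h2lam _).symm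
    _ ≤ Real.sqrt (‖AyE‖ ^ 2) := Real.sqrt_le_sqrt hkey
    _ = ‖AyE‖ := Real.sqrt_sq (norm_nonneg _)

end
end

section
/- Let a_1, ..., a_n be integers and define the polynomial f : ℝⁿ → ℝ by f(x) := (Σ_{j=1}^n a_j x_j)² + Σ_{j=1}^n (x_j² − 1)². Assume inf_{x∈ℝⁿ} f(x) = 0, and let S := {x ∈ ℝⁿ : f(x) = 0}, which is then nonempty. Then there exists a constant c > 0 such that c·d(x,S) ≤ [f(x)]^{1/(8·45ⁿ)} + f(x) for all x ∈ ℝⁿ. -/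
open Filter Topology Metric Set Pointwise
open scoped RealInnerProductSpace ENNReal

noncomputable section

/-- Sign of a real number as an integer in `{1, -1}`. -/
private def sg17 (t : ℝ) : ℤ := if 0 ≤ t then 1 else -1

/-- The sign vector of a point of Euclidean space. -/
private def ev17 {n : ℕ} (x : En n) : En n := WithLp.toLp 2 (fun j => (sg17 (x j) : ℝ))

private lemma sg17_sq (t : ℝ) : ((sg17 t : ℝ)) ^ 2 = 1 := by
  unfold sg17; by_cases h : 0 ≤ t <;> simp [h]

private lemma sg17_coord (t : ℝ) : (t - (sg17 t : ℝ)) ^ 2 ≤ (t ^ 2 - 1) ^ 2 := by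
  unfold sg17
  by_cases h : 0 ≤ t
  · simp only [if_pos h]; push_cast; nlinarith [sq_nonneg (t - 1), sq_nonneg t]
  · simp only [if_neg h]; push_cast; nlinarith [sq_nonneg (t + 1), sq_nonneg t]

private lemma f17_nonneg {n : ℕ} (a : Fin n → ℤ) (f : En n → ℝ)
    (hf : ∀ x : En n, f x = (∑ j, (a j : ℝ) * x j) ^ 2 + ∑ j, (x j ^ 2 - 1) ^ 2)
    (x : En n) : 0 ≤ f x := by rw [hf]; positivity

private lemma f17_term {n : ℕ} (a : Fin n → ℤ) (f : En n → ℝ)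
    (hf : ∀ x : En n, f x = (∑ j, (a j : ℝ) * x j) ^ 2 + ∑ j, (x j ^ 2 - 1) ^ 2)
    (x : En n) (j : Fin n) : (x j ^ 2 - 1) ^ 2 ≤ f x := by
  rw [hf]
  have h1 : (x j ^ 2 - 1) ^ 2 ≤ ∑ j, (x j ^ 2 - 1) ^ 2 :=
    Finset.single_le_sum (f := fun i => (x i ^ 2 - 1) ^ 2) (fun i _ => sq_nonneg _)
      (Finset.mem_univ j)
  nlinarith [sq_nonneg (∑ j, (a j : ℝ) * x j)]

private lemma f17_ax {n : ℕ} (a : Fin n → ℤ) (f : En n → ℝ)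
    (hf : ∀ x : En n, f x = (∑ j, (a j : ℝ) * x j) ^ 2 + ∑ j, (x j ^ 2 - 1) ^ 2)
    (x : En n) : |∑ j, (a j : ℝ) * x j| ≤ Real.sqrt (f x) := by
  apply Real.abs_le_sqrt
  rw [hf]
  have : (0:ℝ) ≤ ∑ j, (x j ^ 2 - 1) ^ 2 := Finset.sum_nonneg fun j _ => sq_nonneg _
  linarith

private lemma f17_mem {n : ℕ} (a : Fin n → ℤ) (f : En n → ℝ)
    (hf : ∀ x : En n, f x = (∑ j, (a j : ℝ) * x j) ^ 2 + ∑ j, (x j ^ 2 - 1) ^ 2)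
    (x : En n) (hx : f x ≤ 1 / (2 * (1 + ∑ j, |(a j : ℝ)|) ^ 2)) :
    f (ev17 x) = 0 := by
  set A : ℝ := 1 + ∑ j, |(a j : ℝ)| with hA
  have hA1 : (1:ℝ) ≤ A := by
    have : (0:ℝ) ≤ ∑ j, |(a j : ℝ)| := Finset.sum_nonneg fun j _ => abs_nonneg _
    linarith
  set δ : ℝ := 1 / (2 * A ^ 2) with hδ
  have hδpos : 0 < δ := by positivity
  have hcoordf : ∀ j, |x j - (sg17 (x j) : ℝ)| ≤ Real.sqrt (f x) := fun j =>
    Real.abs_le_sqrt (le_trans (sg17_coord (x j)) (f17_term a f hf x j))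
  have hsf : Real.sqrt (f x) ≤ Real.sqrt δ := Real.sqrt_le_sqrt hx
  have hAδ : A * Real.sqrt δ < 1 := by
    have h2 : Real.sqrt δ ^ 2 = δ := Real.sq_sqrt hδpos.le
    have h3 : 0 ≤ Real.sqrt δ := Real.sqrt_nonneg _
    have h4 : A ^ 2 * δ = 1 / 2 := by rw [hδ]; field_simp
    have h5 : (A * Real.sqrt δ) ^ 2 = 1 / 2 := by rw [mul_pow, h2]; exact h4
    nlinarith [sq_nonneg (A * Real.sqrt δ - 1)]
  set m : ℤ := ∑ j, a j * sg17 (x j) with hm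
  have hcast : ((m : ℝ)) = ∑ j, (a j : ℝ) * (sg17 (x j) : ℝ) := by
    rw [hm]; push_cast; ring
  have hsplit : ((m : ℝ)) =
      (∑ j, (a j : ℝ) * x j) + ∑ j, (a j : ℝ) * ((sg17 (x j) : ℝ) - x j) := by
    rw [hcast, ← Finset.sum_add_distrib]
    congr 1; ext j; ring
  have hb2 : |∑ j, (a j : ℝ) * ((sg17 (x j) : ℝ) - x j)| ≤ (A - 1) * Real.sqrt (f x) := by
    calc |∑ j, (a j : ℝ) * ((sg17 (x j) : ℝ) - x j)|
        ≤ ∑ j, |(a j : ℝ) * ((sg17 (x j) : ℝ) - x j)| := Finset.abs_sum_le_sum_abs _ _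
      _ ≤ ∑ j, |(a j : ℝ)| * Real.sqrt (f x) := by
          apply Finset.sum_le_sum
          intro j _
          rw [abs_mul]
          have := hcoordf j
          rw [abs_sub_comm] at this
          exact mul_le_mul_of_nonneg_left this (abs_nonneg _)
      _ = (A - 1) * Real.sqrt (f x) := by rw [← Finset.sum_mul, hA]; ring
  have hmlt : |(m : ℝ)| < 1 := by
    have h1 := f17_ax a f hf x
    have h4 : (0:ℝ) ≤ Real.sqrt (f x) := Real.sqrt_nonneg _
    calc |(m : ℝ)| ≤ |∑ j, (a j : ℝ) * x j| + |∑ j, (a j : ℝ) * ((sg17 (x j) : ℝ) - x j)| := by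
          rw [hsplit]; exact abs_add_le _ _
      _ ≤ Real.sqrt (f x) + (A - 1) * Real.sqrt (f x) := add_le_add h1 hb2
      _ = A * Real.sqrt (f x) := by ring
      _ ≤ A * Real.sqrt δ := by nlinarith
      _ < 1 := hAδ
  have hm0 : m = 0 := by
    have h5 : ((|m| : ℤ) : ℝ) < 1 := by rw [Int.cast_abs]; exact hmlt
    have h6 : |m| < 1 := by exact_mod_cast h5
    have h7 := abs_lt.mp h6
    omega
  rw [hf]
  have h1 : (∑ j, (a j : ℝ) * (ev17 x) j) = (m : ℝ) := by rw [hcast]; rfl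
  have h2 : ∀ j, ((ev17 x) j ^ 2 - 1) ^ 2 = 0 := by
    intro j
    show ((sg17 (x j) : ℝ) ^ 2 - 1) ^ 2 = 0
    rw [sg17_sq]; ring
  rw [h1, hm0]
  simp [h2]

private lemma f17_dist {n : ℕ} (a : Fin n → ℤ) (f : En n → ℝ)
    (hf : ∀ x : En n, f x = (∑ j, (a j : ℝ) * x j) ^ 2 + ∑ j, (x j ^ 2 - 1) ^ 2)
    (x : En n) : dist x (ev17 x) ≤ Real.sqrt (↑n * f x) := by
  rw [dist_eq_norm, EuclideanSpace.norm_eq]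
  apply Real.sqrt_le_sqrt
  have hc : ∀ j, ‖(x - ev17 x) j‖ ^ 2 = (x j - (sg17 (x j) : ℝ)) ^ 2 := by
    intro j
    rw [Real.norm_eq_abs, sq_abs]
    rfl
  calc (∑ j, ‖(x - ev17 x) j‖ ^ 2) = ∑ j, (x j - (sg17 (x j) : ℝ)) ^ 2 := by
        exact Finset.sum_congr rfl fun j _ => hc j
    _ ≤ ∑ _j : Fin n, f x :=
        Finset.sum_le_sum fun j _ => le_trans (sg17_coord (x j)) (f17_term a f hf x j)
    _ = ↑n * f x := by rw [Finset.sum_const, Finset.card_univ, Fintype.card_fin, nsmul_eq_mul]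

private lemma f17_normbound {n : ℕ} (a : Fin n → ℤ) (f : En n → ℝ)
    (hf : ∀ x : En n, f x = (∑ j, (a j : ℝ) * x j) ^ 2 + ∑ j, (x j ^ 2 - 1) ^ 2)
    (x : En n) : ‖x‖ ≤ Real.sqrt (2 * n) + 1 + f x := by
  have ht : Real.sqrt (2 * (n:ℝ)) ^ 2 = 2 * n := Real.sq_sqrt (by positivity)
  have ht0 := Real.sqrt_nonneg (2 * (n:ℝ))
  have hu0 := f17_nonneg a f hf x
  have hy : (0:ℝ) ≤ Real.sqrt (2 * n) + 1 + f x := by linarith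
  rw [EuclideanSpace.norm_eq, Real.sqrt_le_left hy]
  have hsum : (∑ j, ‖x j‖ ^ 2) ≤ 2 * n + f x := by
    have hterm2 : ∀ j, ‖x j‖ ^ 2 ≤ 2 + (x j ^ 2 - 1) ^ 2 := by
      intro j
      rw [Real.norm_eq_abs, sq_abs]
      nlinarith [sq_nonneg (x j ^ 2 - 2)]
    calc (∑ j, ‖x j‖ ^ 2) ≤ ∑ j : Fin n, (2 + (x j ^ 2 - 1) ^ 2) :=
          Finset.sum_le_sum fun j _ => hterm2 j
      _ = 2 * n + ∑ j, (x j ^ 2 - 1) ^ 2 := by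
          rw [Finset.sum_add_distrib, Finset.sum_const, Finset.card_univ, Fintype.card_fin,
            nsmul_eq_mul]
          ring
      _ ≤ 2 * n + f x := by
          rw [hf]
          have := sq_nonneg (∑ j, (a j : ℝ) * x j)
          linarith
  nlinarith [mul_nonneg ht0 hu0, sq_nonneg (f x)]

private lemma f17_zero_norm {n : ℕ} (a : Fin n → ℤ) (f : En n → ℝ)
    (hf : ∀ x : En n, f x = (∑ j, (a j : ℝ) * x j) ^ 2 + ∑ j, (x j ^ 2 - 1) ^ 2)
    (x₀ : En n) (hx₀f : f x₀ = 0) : ‖x₀‖ ≤ Real.sqrt n := by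
  rw [EuclideanSpace.norm_eq]
  apply Real.sqrt_le_sqrt
  have hone : ∀ j, ‖x₀ j‖ ^ 2 = 1 := by
    intro j
    have h := hx₀f ▸ f17_term a f hf x₀ j
    have h0 : (x₀ j ^ 2 - 1) ^ 2 = 0 := le_antisymm h (sq_nonneg _)
    have h2 : x₀ j ^ 2 = 1 := by nlinarith
    rw [Real.norm_eq_abs, sq_abs, h2]
  rw [Finset.sum_congr rfl fun j _ => hone j, Finset.sum_const, Finset.card_univ,
    Fintype.card_fin, nsmul_eq_mul, mul_one]

/-- Hölder-type global error bound for the polynomial arising from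
the partition problem. -/
theorem stmt_17 (n : ℕ) (a : Fin n → ℤ) (f : En n → ℝ)
    (hf : ∀ x : En n,
      f x = (∑ j, (a j : ℝ) * x j) ^ 2 + ∑ j, (x j ^ 2 - 1) ^ 2)
    (hinf : IsGLB (Set.range f) 0)
    (S : Set (En n)) (hS : S = {x | f x = 0}) :
    S.Nonempty ∧
    ∃ c > (0:ℝ), ∀ x : En n,
      c * infDist x S ≤ f x ^ ((1:ℝ) / (8 * 45 ^ n)) + f x := by
  classical
  have hf0 : ∀ x : En n, 0 ≤ f x := f17_nonneg a f hf
  set A : ℝ := 1 + ∑ j, |(a j : ℝ)| with hA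
  have hA1 : (1:ℝ) ≤ A := by
    have : (0:ℝ) ≤ ∑ j, |(a j : ℝ)| := Finset.sum_nonneg fun j _ => abs_nonneg _
    linarith
  set δ : ℝ := 1 / (2 * A ^ 2) with hδ
  have hδpos : 0 < δ := by positivity
  have hδ1 : δ ≤ 1 := by
    rw [hδ, div_le_one (by positivity)]; nlinarith
  have hmem : ∀ x : En n, f x ≤ δ → ev17 x ∈ S := by
    intro x hx
    rw [hS]
    exact f17_mem a f hf x hx
  have hSne : S.Nonempty := by
    have hnl : δ ∉ lowerBounds (Set.range f) := by
      intro h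
      have := hinf.2 h
      linarith
    simp only [lowerBounds, Set.mem_setOf_eq, Set.mem_range] at hnl
    push_neg at hnl
    obtain ⟨y, ⟨x, rfl⟩, hy⟩ := hnl
    exact ⟨ev17 x, hmem x hy.le⟩
  obtain ⟨x₀, hx₀⟩ := hSne
  have hx₀f : f x₀ = 0 := by rw [hS] at hx₀; exact hx₀
  have hx₀n : ‖x₀‖ ≤ Real.sqrt n := f17_zero_norm a f hf x₀ hx₀f
  set B : ℝ := Real.sqrt (2 * n) + Real.sqrt n + Real.sqrt (↑n + 1) + 2 with hB
  have hBpos : 0 < B := by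
    have := Real.sqrt_nonneg (2 * (n:ℝ))
    have := Real.sqrt_nonneg ((n:ℝ))
    have := Real.sqrt_nonneg ((n:ℝ) + 1)
    rw [hB]; linarith
  set c : ℝ := min (1/2) (δ / (2 * B)) with hc
  have hcpos : 0 < c := lt_min (by norm_num) (by positivity)
  refine ⟨⟨x₀, hx₀⟩, c, hcpos, ?_⟩
  intro x
  set θ : ℝ := (1:ℝ) / (8 * 45 ^ n) with hθ
  have hθpos : 0 < θ := by positivity
  have hθhalf : θ ≤ 1/2 := by
    rw [hθ]
    apply div_le_div_of_nonneg_left (by norm_num) (by norm_num)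
    have : (1:ℝ) ≤ 45 ^ n := one_le_pow₀ (by norm_num)
    linarith
  have hrpow0 : 0 ≤ f x ^ θ := Real.rpow_nonneg (hf0 x) _
  by_cases hsmall : f x ≤ δ
  · rcases eq_or_lt_of_le (hf0 x) with hz | hz
    · have hxS : x ∈ S := by rw [hS]; exact hz.symm
      rw [infDist_zero_of_mem hxS]
      simp only [mul_zero]
      linarith [hf0 x]
    · have hle : infDist x S ≤ Real.sqrt (↑n * f x) :=
        le_trans (infDist_le_dist_of_mem (hmem x hsmall)) (f17_dist a f hf x)
      have hfx1 : f x ≤ 1 := le_trans hsmall hδ1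
      have key : Real.sqrt (↑n * f x) ≤ Real.sqrt (↑n + 1) * f x ^ θ := by
        rw [Real.sqrt_mul (by positivity), Real.sqrt_eq_rpow (f x)]
        have h1 : f x ^ ((1:ℝ)/2) ≤ f x ^ θ :=
          Real.rpow_le_rpow_of_exponent_ge hz hfx1 hθhalf
        have h2 : Real.sqrt ↑n ≤ Real.sqrt (↑n + 1) := Real.sqrt_le_sqrt (by linarith)
        exact mul_le_mul h2 h1 (Real.rpow_nonneg (hf0 x) _) (Real.sqrt_nonneg _)
      have hcB : c * Real.sqrt (↑n + 1) ≤ 1 := by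
        have h1 : c ≤ δ / (2 * B) := min_le_right _ _
        have h2 : Real.sqrt (↑n + 1) ≤ B := by
          have := Real.sqrt_nonneg (2 * (n:ℝ))
          have := Real.sqrt_nonneg ((n:ℝ))
          rw [hB]; linarith
        have h4 : c * Real.sqrt (↑n + 1) ≤ (δ / (2 * B)) * B :=
          mul_le_mul h1 h2 (Real.sqrt_nonneg _) (by positivity)
        have h5 : (δ / (2 * B)) * B = δ / 2 := by field_simp
        rw [h5] at h4
        linarith
      have h6 : c * infDist x S ≤ c * (Real.sqrt (↑n + 1) * f x ^ θ) :=
        mul_le_mul_of_nonneg_left (le_trans hle key) hcpos.le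
      have h7 : c * (Real.sqrt (↑n + 1) * f x ^ θ) ≤ 1 * f x ^ θ := by
        rw [← mul_assoc]
        exact mul_le_mul_of_nonneg_right hcB hrpow0
      have := hf0 x
      linarith
  · push_neg at hsmall
    have hid : infDist x S ≤ B + f x := by
      calc infDist x S ≤ dist x x₀ := infDist_le_dist_of_mem hx₀
        _ ≤ ‖x‖ + ‖x₀‖ := by rw [dist_eq_norm]; exact norm_sub_le _ _
        _ ≤ (Real.sqrt (2 * n) + 1 + f x) + Real.sqrt n :=
            add_le_add (f17_normbound a f hf x) hx₀n
        _ ≤ B + f x := by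
            have := Real.sqrt_nonneg ((n:ℝ) + 1)
            rw [hB]; linarith
    have hfin : c * (B + f x) ≤ f x := by
      have h1 : c ≤ δ / (2 * B) := min_le_right _ _
      have h2 : c ≤ 1/2 := min_le_left _ _
      have h3 : c * B ≤ δ / 2 := by
        have h4 : c * B ≤ (δ / (2 * B)) * B := mul_le_mul_of_nonneg_right h1 hBpos.le
        have h5 : (δ / (2 * B)) * B = δ / 2 := by field_simp
        linarith [h5 ▸ h4]
      have h4 : c * f x ≤ f x / 2 := by nlinarith [hf0 x]
      nlinarith
    calc c * infDist x S ≤ c * (B + f x) := mul_le_mul_of_nonneg_left hid hcpos.le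
      _ ≤ f x := hfin
      _ ≤ f x ^ θ + f x := by linarith

end
end
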